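/- arXiv:1603.08596 — 2 statements merged into one kernel-verified Lean document; each statement's English description precedes it below -/
import Mathlib

section
/- In any connected chord diagram, the first terminal chord in the intersection order is the chord containing the last point 2n of the diagram. -/
open scoped Classical

namespace ChordStmt

/-- Chord `p` has an outgoing edge to chord `q` in the oriented intersection graph. -/
def crosses (p q : ℕ × ℕ) : Prop := p.1 < q.1 ∧ q.1 < p.2 ∧ p.2 < q.2

/-- A finite set of pairs `(a,b)` with `a < b` and all endpoints distinct. -/
def IsMatching (D : Finset (ℕ × ℕ)) : Prop :=
  (∀ p ∈ D, p.1 < p.2) ∧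
  ∀ p ∈ D, ∀ q ∈ D, p ≠ q → p.1 ≠ q.1 ∧ p.1 ≠ q.2 ∧ p.2 ≠ q.1 ∧ p.2 ≠ q.2

def points (D : Finset (ℕ × ℕ)) : Finset ℕ := D.biUnion fun p => {p.1, p.2}

/-- A chord diagram with `n` chords: a perfect matching of `{1, …, 2n}`. -/
def IsDiagramOn (n : ℕ) (D : Finset (ℕ × ℕ)) : Prop :=
  IsMatching D ∧ points D = Finset.Icc 1 (2 * n)

def Step (D : Finset (ℕ × ℕ)) (a b : ℕ × ℕ) : Prop :=
  a ∈ D ∧ b ∈ D ∧ (crosses a b ∨ crosses b a)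

def Reach (D : Finset (ℕ × ℕ)) (a b : ℕ × ℕ) : Prop :=
  Relation.ReflTransGen (Step D) a b

/-- The diagram is connected (its intersection graph is connected). -/
def ConnectedDiagram (D : Finset (ℕ × ℕ)) : Prop :=
  D.Nonempty ∧ ∀ p ∈ D, ∀ q ∈ D, Reach D p q

/-- A chord is terminal if it has no outgoing edge in the oriented intersection graph. -/
def IsTerminal (D : Finset (ℕ × ℕ)) (p : ℕ × ℕ) : Prop :=
  p ∈ D ∧ ∀ q ∈ D, ¬ crosses p q

/-- The number of connected chord diagrams with `n` chords. -/
noncomputable def c (n : ℕ) : ℕ :=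
  Set.ncard {D : Finset (ℕ × ℕ) | IsDiagramOn n D ∧ ConnectedDiagram D}

/-- The root chord: the chord with the smallest first endpoint. -/
noncomputable def rootChord (D : Finset (ℕ × ℕ)) : ℕ × ℕ :=
  if h : ∃ p ∈ D, ∀ q ∈ D, p.1 ≤ q.1 then h.choose else (0, 0)

lemma rootChord_mem {D : Finset (ℕ × ℕ)} (h : D.Nonempty) : rootChord D ∈ D := by
  have hex : ∃ p ∈ D, ∀ q ∈ D, p.1 ≤ q.1 := by
    obtain ⟨p, hp, hmin⟩ := D.exists_min_image Prod.fst h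
    exact ⟨p, hp, hmin⟩
  rw [rootChord, dif_pos hex]
  exact hex.choose_spec.1

/-- The connected component of the chord `p` in the diagram `D`. -/
noncomputable def componentOf (D : Finset (ℕ × ℕ)) (p : ℕ × ℕ) : Finset (ℕ × ℕ) :=
  D.filter fun q => Reach D p q

/-- The list of chords of `D` in intersection order: the root chord first, then
recursively the chords of the connected components of `D` minus the root chord,
components ordered by first vertex (equivalently: repeatedly split off the component
of the current root chord). -/
noncomputable def interOrder (D : Finset (ℕ × ℕ)) : List (ℕ × ℕ) :=
  if h : D.Nonempty then
    if hK : componentOf D (rootChord D) = D then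
      rootChord D :: interOrder (D.erase (rootChord D))
    else
      interOrder (componentOf D (rootChord D)) ++
        interOrder (D \ componentOf D (rootChord D))
  else []
termination_by D.card
decreasing_by
  · exact Finset.card_erase_lt_of_mem (rootChord_mem h)
  · exact Finset.card_lt_card
      (Finset.ssubset_iff_subset_ne.mpr ⟨Finset.filter_subset _ _, hK⟩)
  · exact Finset.card_lt_card
      (Finset.sdiff_ssubset (Finset.filter_subset _ _)
        ⟨rootChord D, Finset.mem_filter.mpr ⟨rootChord_mem h, Relation.ReflTransGen.refl⟩⟩)

/-- `b(C)`: the (1-based) index of the first terminal chord in the intersection order. -/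
noncomputable def bIndex (D : Finset (ℕ × ℕ)) : ℕ :=
  (interOrder D).findIdx (fun p => decide (IsTerminal D p)) + 1

/-- `b_{n,k}`: the number of connected chord diagrams `C` with `n` chords and `b(C) ≥ n - k`. -/
noncomputable def bCount (n k : ℕ) : ℕ :=
  Set.ncard {D : Finset (ℕ × ℕ) |
    IsDiagramOn n D ∧ ConnectedDiagram D ∧ n - k ≤ bIndex D}

/-- The terminal chords of `D` are exactly the last `k` chords in intersection order. -/
def TerminalExactlyLast (D : Finset (ℕ × ℕ)) (k : ℕ) : Prop :=
  ∀ i : Fin (interOrder D).length,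
    IsTerminal D ((interOrder D).get i) ↔ (interOrder D).length - k ≤ (i : ℕ)

/-- `o_{n,k}`: connected diagrams with `n` chords whose terminal chords are exactly
the last `k` chords in intersection order. -/
noncomputable def oCount (n k : ℕ) : ℕ :=
  Set.ncard {D : Finset (ℕ × ℕ) |
    IsDiagramOn n D ∧ ConnectedDiagram D ∧ TerminalExactlyLast D k}

end ChordStmt

namespace ChordStmt

/-! ### Auxiliary lemmas -/

lemma rootChord_spec {D : Finset (ℕ × ℕ)} (h : D.Nonempty) :
    rootChord D ∈ D ∧ ∀ q ∈ D, (rootChord D).1 ≤ q.1 := by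
  have hex : ∃ p ∈ D, ∀ q ∈ D, p.1 ≤ q.1 := by
    obtain ⟨p, hp, hmin⟩ := D.exists_min_image Prod.fst h
    exact ⟨p, hp, hmin⟩
  rw [rootChord, dif_pos hex]
  exact ⟨hex.choose_spec.1, hex.choose_spec.2⟩

lemma step_symm {T : Finset (ℕ × ℕ)} {a b : ℕ × ℕ} (h : Step T a b) : Step T b a :=
  ⟨h.2.1, h.1, h.2.2.symm⟩

lemma reach_symm {T : Finset (ℕ × ℕ)} {a b : ℕ × ℕ} (h : Reach T a b) : Reach T b a :=
  (@Relation.ReflTransGen.stdSymm _ _ ⟨fun _ _ hs => step_symm hs⟩).symm _ _ h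

lemma reach_component {T : Finset (ℕ × ℕ)} {c x : ℕ × ℕ} (h : Reach T c x) :
    Reach (componentOf T c) c x := by
  induction h with
  | refl => exact Relation.ReflTransGen.refl
  | tail hab step ih =>
      exact ih.tail ⟨Finset.mem_filter.mpr ⟨step.1, hab⟩,
        Finset.mem_filter.mpr ⟨step.2.1, hab.tail step⟩, step.2.2⟩

lemma connected_component {T : Finset (ℕ × ℕ)} {c : ℕ × ℕ} (hc : c ∈ T) :
    ConnectedDiagram (componentOf T c) := by
  refine ⟨⟨c, Finset.mem_filter.mpr ⟨hc, Relation.ReflTransGen.refl⟩⟩, ?_⟩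
  intro p hp q hq
  exact (reach_symm (reach_component (Finset.mem_filter.mp hp).2)).trans
    (reach_component (Finset.mem_filter.mp hq).2)

lemma matching_subset {S T : Finset (ℕ × ℕ)} (hTS : T ⊆ S) (h : IsMatching S) :
    IsMatching T :=
  ⟨fun p hp => h.1 p (hTS hp), fun p hp q hq => h.2 p (hTS hp) q (hTS hq)⟩

lemma componentOf_eq_self {S : Finset (ℕ × ℕ)} (hconn : ConnectedDiagram S) :
    componentOf S (rootChord S) = S := by
  apply Finset.filter_true_of_mem
  intro q hq
  exact hconn.2 _ (rootChord_spec hconn.1).1 q hq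

lemma interOrder_empty : interOrder (∅ : Finset (ℕ × ℕ)) = [] := by
  rw [interOrder]
  simp

lemma spanning_aux {T : Finset (ℕ × ℕ)} {a b : ℕ × ℕ} {t : ℕ}
    (h : Reach T a b) (ha : a ∈ T) (ha1 : a.1 ≤ t) :
    (b ∈ T ∧ b.1 ≤ t) ∨ ∃ q ∈ T, Reach T a q ∧ q.1 ≤ t ∧ t < q.2 := by
  induction h with
  | refl => exact Or.inl ⟨ha, ha1⟩
  | @tail b c hab step ih =>
      rcases ih with ⟨hbT, hb1⟩ | h2
      · by_cases hbt : t < b.2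
        · exact Or.inr ⟨b, hbT, hab, hb1, hbt⟩
        · push_neg at hbt
          rcases step.2.2 with hc | hc
          · exact Or.inl ⟨step.2.1, le_trans (le_of_lt hc.2.1) hbt⟩
          · exact Or.inl ⟨step.2.1, le_trans (le_of_lt hc.1) hb1⟩
      · exact Or.inr h2

lemma spanning {T : Finset (ℕ × ℕ)} {a b : ℕ × ℕ} {t : ℕ}
    (h : Reach T a b) (ha : a ∈ T) (ha1 : a.1 ≤ t) (hb : t < b.2) :
    ∃ q ∈ T, Reach T a q ∧ q.1 ≤ t ∧ t < q.2 := by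
  rcases spanning_aux h ha ha1 with ⟨hbT, hb1⟩ | h2
  · exact ⟨b, hbT, h, hb1, hb⟩
  · exact h2

lemma bridge_aux {S : Finset (ℕ × ℕ)} (hM : IsMatching S) (hS : S.Nonempty)
    {x : ℕ × ℕ} (h : Reach S x (rootChord S)) :
    x = rootChord S ∨ ∃ y ∈ S.erase (rootChord S), crosses (rootChord S) y ∧
      Reach (S.erase (rootChord S)) x y := by
  obtain ⟨hrS, hrmin⟩ := rootChord_spec hS
  set r := rootChord S with hr
  have hcross_ar : ∀ z ∈ S, z ≠ r → ¬ crosses z r := by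
    intro z hz hzr hc
    have h1 : r.1 ≤ z.1 := hrmin z hz
    have h2 : r.1 ≠ z.1 := (hM.2 r hrS z hz (Ne.symm hzr)).1
    have := hc.1
    omega
  induction h using Relation.ReflTransGen.head_induction_on with
  | refl => exact Or.inl rfl
  | @head a c step h' ih =>
      by_cases har : a = r
      · exact Or.inl har
      · have haS : a ∈ S := step.1
        have haS' : a ∈ S.erase r := Finset.mem_erase.mpr ⟨har, haS⟩
        by_cases hcr2 : c = r
        · subst hcr2
          rcases step.2.2 with h1 | h1
          · exact absurd h1 (hcross_ar a haS har)
          · exact Or.inr ⟨a, haS', h1, Relation.ReflTransGen.refl⟩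
        · rcases ih with hcr | ⟨y, hyS', hy, hreach⟩
          · exact absurd hcr hcr2
          · have hcS' : c ∈ S.erase r := Finset.mem_erase.mpr ⟨hcr2, step.2.1⟩
            exact Or.inr ⟨y, hyS', hy,
              Relation.ReflTransGen.head ⟨haS', hcS', step.2.2⟩ hreach⟩

lemma bridge {S : Finset (ℕ × ℕ)} (hM : IsMatching S) (hconn : ConnectedDiagram S)
    {x : ℕ × ℕ} (hx : x ∈ S.erase (rootChord S)) :
    ∃ y ∈ S.erase (rootChord S), crosses (rootChord S) y ∧
      Reach (S.erase (rootChord S)) x y := by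
  have hS := hconn.1
  have hxS : x ∈ S := (Finset.mem_erase.mp hx).2
  have h : Reach S x (rootChord S) := hconn.2 x hxS (rootChord S) (rootChord_spec hS).1
  rcases bridge_aux hM hS h with heq | h2
  · exact absurd heq (Finset.mem_erase.mp hx).1
  · exact h2

/-- The crux: after removing the root of a connected diagram, the chord `m` with
the maximal right endpoint lies in the component of the new root. -/
lemma crux {S : Finset (ℕ × ℕ)} (hM : IsMatching S) (hconn : ConnectedDiagram S)
    {m : ℕ × ℕ} (hm : m ∈ S) (hmax : ∀ q ∈ S, q.2 ≤ m.2) (hmr : m ≠ rootChord S) :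
    Reach (S.erase (rootChord S)) (rootChord (S.erase (rootChord S))) m := by
  set r := rootChord S with hr
  set S' := S.erase r with hS'def
  have hS : S.Nonempty := hconn.1
  have hmS' : m ∈ S' := Finset.mem_erase.mpr ⟨hmr, hm⟩
  have hS'ne : S'.Nonempty := ⟨m, hmS'⟩
  obtain ⟨hr'S, hr'min⟩ := rootChord_spec hS'ne
  set r' := rootChord S' with hr'
  obtain ⟨ym, hymS', hym, hreach_m_ym⟩ := bridge hM hconn hmS'
  obtain ⟨yr, hyrS', hyr, hreach_r'_yr⟩ := bridge hM hconn hr'S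
  obtain ⟨z, hz, hzmax⟩ := Finset.exists_max_image (componentOf S' r') Prod.snd
      ⟨r', Finset.mem_filter.mpr ⟨hr'S, Relation.ReflTransGen.refl⟩⟩
  have hzS' : z ∈ S' := (Finset.mem_filter.mp hz).1
  have hzreach : Reach S' r' z := (Finset.mem_filter.mp hz).2
  by_cases hzm : z = m
  · exact hzm ▸ hzreach
  have hzS : z ∈ S := (Finset.mem_erase.mp hzS').2
  have hz2 : z.2 < m.2 := lt_of_le_of_ne (hmax z hzS) ((hM.2 z hzS m hm hzm).2.2.2)
  have hyr_comp : yr.2 ≤ z.2 := hzmax yr (Finset.mem_filter.mpr ⟨hyrS', hreach_r'_yr⟩)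
  have hym1 : ym.1 ≤ z.2 := le_of_lt (lt_of_lt_of_le (lt_trans hym.2.1 hyr.2.2) hyr_comp)
  obtain ⟨q, hqS', hreach_ym_q, hq1, hq2⟩ :=
    spanning (reach_symm hreach_m_ym) hymS' hym1 hz2
  have hreach_q_m : Reach S' q m := (reach_symm hreach_ym_q).trans (reach_symm hreach_m_ym)
  by_cases hq : Reach S' r' q
  · exact hq.trans hreach_q_m
  · have hqz : q ≠ z := fun h => hq (h ▸ hzreach)
    have hqS : q ∈ S := (Finset.mem_erase.mp hqS').2
    have hq1' : q.1 < z.2 := lt_of_le_of_ne hq1 ((hM.2 q hqS z hzS hqz).2.1)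
    obtain ⟨w, hwS', hreach_r'_w, hw1, hw2⟩ :=
      spanning hzreach hr'S (hr'min q hqS') hq1'
    have hwq : w ≠ q := fun h => hq (h ▸ hreach_r'_w)
    have hwS : w ∈ S := (Finset.mem_erase.mp hwS').2
    have hw1' : w.1 < q.1 := lt_of_le_of_ne hw1 ((hM.2 w hwS q hqS hwq).1)
    have hwz2 : w.2 ≤ z.2 := hzmax w (Finset.mem_filter.mpr ⟨hwS', hreach_r'_w⟩)
    have hcross : crosses w q := ⟨hw1', hw2, lt_of_le_of_lt hwz2 hq2⟩
    exact (hreach_r'_w.tail ⟨hwS', hqS', Or.inl hcross⟩).trans hreach_q_m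

/-- Main lemma: in a connected matching `S`, the interOrder is `l1 ++ m :: l2`
where `m` is the chord with maximal right endpoint and every chord of `l1`
crosses some chord of `S`. -/
lemma main_lemma : ∀ S : Finset (ℕ × ℕ), IsMatching S → ConnectedDiagram S →
    ∀ m ∈ S, (∀ q ∈ S, q.2 ≤ m.2) →
    ∃ l1 l2, interOrder S = l1 ++ m :: l2 ∧ ∀ p ∈ l1, ∃ q ∈ S, crosses p q := by
  intro S
  induction S using Finset.strongInduction with
  | _ S IH =>
    intro hM hconn m hm hmax
    have hS : S.Nonempty := hconn.1
    set r := rootChord S with hrdef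
    have hKS : componentOf S r = S := componentOf_eq_self hconn
    have hunfold : interOrder S = r :: interOrder (S.erase r) := by
      rw [interOrder, dif_pos hS, dif_pos hKS]
    by_cases hrm : r = m
    · exact ⟨[], interOrder (S.erase r), by rw [hunfold, hrm]; rfl, by simp⟩
    · obtain ⟨hrS, hrmin⟩ := rootChord_spec hS
      have hreach : Reach S r m := hconn.2 r hrS m hm
      rcases hreach.cases_head with heq | ⟨c, hstep, -⟩
      · exact absurd heq hrm
      have hcross : crosses r c := by
        rcases hstep.2.2 with h1 | h1
        · exact h1
        · have h2 : r.1 ≤ c.1 := hrmin c hstep.2.1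
          have h3 := h1.1
          omega
      set S' := S.erase r with hS'def
      have hmS' : m ∈ S' := Finset.mem_erase.mpr ⟨fun h => hrm h.symm, hm⟩
      have hS'ne : S'.Nonempty := ⟨m, hmS'⟩
      have hS'sub : S' ⊂ S := Finset.erase_ssubset hrS
      set r' := rootChord S' with hr'def
      set K := componentOf S' r' with hKdef
      have hmK : m ∈ K := Finset.mem_filter.mpr
        ⟨hmS', crux hM hconn hm hmax (fun h => hrm h.symm)⟩
      have hKsubS' : K ⊆ S' := Finset.filter_subset _ _
      have hKsubS : K ⊆ S := hKsubS'.trans (Finset.erase_subset _ _)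
      have hKss : K ⊂ S := Finset.ssubset_of_subset_of_ssubset hKsubS' hS'sub
      obtain ⟨l1, l2, hK, hl1⟩ := IH K hKss (matching_subset hKsubS hM)
        (connected_component (rootChord_spec hS'ne).1) m hmK
        (fun q hq => hmax q (hKsubS hq))
      have hsplit : interOrder S' = interOrder K ++ interOrder (S' \ K) := by
        by_cases hKeq : K = S'
        · rw [hKeq, Finset.sdiff_self, interOrder_empty, List.append_nil]
        · rw [interOrder, dif_pos hS'ne, dif_neg hKeq]
      refine ⟨r :: l1, l2 ++ interOrder (S' \ K), ?_, ?_⟩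
      · rw [hunfold, hsplit, hK]
        simp
      · intro p hp
        rcases List.mem_cons.mp hp with rfl | hp'
        · exact ⟨c, hstep.2.1, hcross⟩
        · obtain ⟨q, hq, hcr⟩ := hl1 p hp'
          exact ⟨q, hKsubS hq, hcr⟩

/-- in any connected chord diagram on `{1,…,2n}`, the first terminal
chord in the intersection order is the chord containing the last point `2n`. -/
theorem stmt15 (n : ℕ) (D : Finset (ℕ × ℕ)) (hn : 1 ≤ n)
    (hD : IsDiagramOn n D) (hconn : ConnectedDiagram D) :
    ∃ i : Fin (interOrder D).length,
      IsTerminal D ((interOrder D).get i) ∧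
      (∀ j : Fin (interOrder D).length,
        IsTerminal D ((interOrder D).get j) → (i : ℕ) ≤ (j : ℕ)) ∧
      ((interOrder D).get i).2 = 2 * n := by
  have hpt : ∀ q ∈ D, q.2 ≤ 2 * n := by
    intro q hq
    have : q.2 ∈ points D := Finset.mem_biUnion.mpr ⟨q, hq, by simp⟩
    rw [hD.2, Finset.mem_Icc] at this
    exact this.2
  have h2n : (2 * n) ∈ points D := by
    rw [hD.2, Finset.mem_Icc]
    omega
  obtain ⟨m, hmD, hm2⟩ : ∃ m ∈ D, m.2 = 2 * n := by
    rw [points, Finset.mem_biUnion] at h2n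
    obtain ⟨p, hp, hmem⟩ := h2n
    simp only [Finset.mem_insert, Finset.mem_singleton] at hmem
    rcases hmem with h | h
    · exfalso
      have h1 := hD.1.1 p hp
      have h2 := hpt p hp
      omega
    · exact ⟨p, hp, h.symm⟩
  have hmax : ∀ q ∈ D, q.2 ≤ m.2 := fun q hq => hm2 ▸ hpt q hq
  obtain ⟨l1, l2, h, hnl⟩ := main_lemma D hD.1 hconn m hmD hmax
  have hlen : l1.length < (interOrder D).length := by
    rw [h]
    simp
  refine ⟨⟨l1.length, hlen⟩, ?_, ?_, ?_⟩
  · have hget : (interOrder D).get ⟨l1.length, hlen⟩ = m := by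
      rw [List.get_of_eq h]
      simp only [List.get_eq_getElem, Fin.coe_cast]
      rw [List.getElem_append_right (le_refl l1.length)]
      simp
    rw [hget]
    refine ⟨hmD, fun q hq hc => ?_⟩
    have := hpt q hq
    have := hc.2.2
    omega
  · intro j hj
    by_contra hlt
    push_neg at hlt
    have hj' : (j : ℕ) < l1.length := hlt
    have hget : (interOrder D).get j = l1[(j : ℕ)]'hj' := by
      rw [List.get_of_eq h]
      simp [List.getElem_append_left, hj']
    rw [hget] at hj
    obtain ⟨q, hq, hcr⟩ := hnl _ (List.getElem_mem hj')
    exact hj.2 q hq hcr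
  · have hget : (interOrder D).get ⟨l1.length, hlen⟩ = m := by
      rw [List.get_of_eq h]
      simp only [List.get_eq_getElem, Fin.coe_cast]
      rw [List.getElem_append_right (le_refl l1.length)]
      simp
    rw [hget, hm2]

end ChordStmt
end

section
/- Let g_{n,k} be defined by g_{n,2} = 1/(2n), g_{n,k} = (1−1/n)g_{n-1,k-1} + (1/(2n))g_{n-2,k-1} for n ≥ 4, with probability-distribution initial conditions for n ≤ 3. Then the mean Σ_k k·g_{n,k} is asymptotically equivalent to 2n/3 as n → ∞. -/
open Filter
open Finset in
section
open Finset
private lemma stmt18_zero (g : ℕ → ℕ → ℝ)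
    (hsupp : ∀ n k : ℕ, 2 ≤ n → (k < 2 ∨ (n ≤ 3 ∧ n < k)) → g n k = 0)
    (hrec : ∀ n k : ℕ, 4 ≤ n → 3 ≤ k →
      g n k = (1 - 1 / (n : ℝ)) * g (n - 1) (k - 1) +
        (1 / (2 * (n : ℝ))) * g (n - 2) (k - 1)) :
    ∀ n, 2 ≤ n → ∀ k, n < k → g n k = 0 := by
  intro n
  induction n using Nat.strong_induction_on with
  | _ n ih =>
    intro h2 k hk
    by_cases h3 : n ≤ 3
    · exact hsupp n k h2 (Or.inr ⟨h3, hk⟩)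
    · have h4 : 4 ≤ n := by omega
      rw [hrec n k h4 (by omega), ih (n-1) (by omega) (by omega) (k-1) (by omega),
          ih (n-2) (by omega) (by omega) (k-1) (by omega)]
      ring

private lemma stmt18_key (g : ℕ → ℕ → ℝ)
    (hsupp : ∀ n k : ℕ, 2 ≤ n → (k < 2 ∨ (n ≤ 3 ∧ n < k)) → g n k = 0)
    (hg2 : ∀ n : ℕ, 4 ≤ n → g n 2 = 1 / (2 * (n : ℝ)))
    (hrec : ∀ n k : ℕ, 4 ≤ n → 3 ≤ k →
      g n k = (1 - 1 / (n : ℝ)) * g (n - 1) (k - 1) +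
        (1 / (2 * (n : ℝ))) * g (n - 2) (k - 1))
    (w : ℕ → ℝ) (m : ℕ) :
    ∑ k ∈ range (m+5), w k * g (m+4) k =
      w 2 * (1/(2*((m:ℝ)+4)))
      + (1 - 1/((m:ℝ)+4)) * ∑ j ∈ range (m+4), w (j+1) * g (m+3) j
      + (1/(2*((m:ℝ)+4))) * ∑ j ∈ range (m+3), w (j+1) * g (m+2) j := by
  have hz := stmt18_zero g hsupp hrec
  have h0 : g (m+4) 0 = 0 := hsupp _ _ (by omega) (Or.inl (by omega))
  have h1 : g (m+4) 1 = 0 := hsupp _ _ (by omega) (Or.inl (by omega))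
  have h30 : g (m+3) 0 = 0 := hsupp _ _ (by omega) (Or.inl (by omega))
  have h31 : g (m+3) 1 = 0 := hsupp _ _ (by omega) (Or.inl (by omega))
  have h20 : g (m+2) 0 = 0 := hsupp _ _ (by omega) (Or.inl (by omega))
  have h21 : g (m+2) 1 = 0 := hsupp _ _ (by omega) (Or.inl (by omega))
  have htop : g (m+2) (2+(m+1)) = 0 := hz (m+2) (by omega) _ (by omega)
  have hcast : ((m+4 : ℕ) : ℝ) = (m:ℝ)+4 := by push_cast; ring
  -- LHS split
  have L : ∑ k ∈ range (m+5), w k * g (m+4) k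
      = w 2 * (1/(2*((m:ℝ)+4)))
        + ∑ i ∈ range (m+2), w (3+i) * g (m+4) (3+i) := by
    rw [show m+5 = 3 + (m+2) from by omega, Finset.sum_range_add]
    simp [Finset.sum_range_succ, h0, h1, hg2 (m+4) (by omega), hcast]
  rw [L]
  have hterm : ∀ i ∈ range (m+2), w (3+i) * g (m+4) (3+i)
      = (1 - 1/((m:ℝ)+4)) * (w (3+i) * g (m+3) (2+i))
        + (1/(2*((m:ℝ)+4))) * (w (3+i) * g (m+2) (2+i)) := by
    intro i _
    rw [hrec (m+4) (3+i) (by omega) (by omega)]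
    rw [show m+4-1 = m+3 from by omega, show m+4-2 = m+2 from by omega,
        show 3+i-1 = 2+i from by omega, hcast]
    ring
  rw [Finset.sum_congr rfl hterm, Finset.sum_add_distrib, ← Finset.mul_sum, ← Finset.mul_sum]
  -- RHS sums
  have R1 : ∑ j ∈ range (m+4), w (j+1) * g (m+3) j
      = ∑ i ∈ range (m+2), w (3+i) * g (m+3) (2+i) := by
    rw [show m+4 = 2 + (m+2) from by omega, Finset.sum_range_add]
    have hz2 : ∑ j ∈ range 2, w (j+1) * g (m+3) j = 0 := by
      simp [Finset.sum_range_succ, h30, h31]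
    rw [hz2, zero_add]
    exact Finset.sum_congr rfl fun i _ => by rw [show 2+i+1 = 3+i from by omega]
  have R2 : ∑ j ∈ range (m+3), w (j+1) * g (m+2) j
      = ∑ i ∈ range (m+1), w (3+i) * g (m+2) (2+i) := by
    rw [show m+3 = 2 + (m+1) from by omega, Finset.sum_range_add]
    have hz2 : ∑ j ∈ range 2, w (j+1) * g (m+2) j = 0 := by
      simp [Finset.sum_range_succ, h20, h21]
    rw [hz2, zero_add]
    exact Finset.sum_congr rfl fun i _ => by rw [show 2+i+1 = 3+i from by omega]
  have R3 : ∑ i ∈ range (m+2), w (3+i) * g (m+2) (2+i)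
      = ∑ i ∈ range (m+1), w (3+i) * g (m+2) (2+i) := by
    rw [Finset.sum_range_succ, show 3+(m+1) = 2+(m+2) from by omega]
    rw [show (2:ℕ)+(m+1) = 2+(m+1) from rfl]
    rw [htop]
    ring
  rw [R1, R2, ← R3]
  ring

private lemma stmt18_mass (g : ℕ → ℕ → ℝ)
    (hsupp : ∀ n k : ℕ, 2 ≤ n → (k < 2 ∨ (n ≤ 3 ∧ n < k)) → g n k = 0)
    (hinit : ∀ n : ℕ, 2 ≤ n → n ≤ 3 → ∑ k ∈ Finset.range (n + 1), g n k = 1)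
    (hg2 : ∀ n : ℕ, 4 ≤ n → g n 2 = 1 / (2 * (n : ℝ)))
    (hrec : ∀ n k : ℕ, 4 ≤ n → 3 ≤ k →
      g n k = (1 - 1 / (n : ℝ)) * g (n - 1) (k - 1) +
        (1 / (2 * (n : ℝ))) * g (n - 2) (k - 1)) :
    ∀ n, 2 ≤ n → ∑ k ∈ range (n+1), g n k = 1 := by
  intro n
  induction n using Nat.strong_induction_on with
  | _ n ih =>
    intro h2
    by_cases h3 : n ≤ 3
    · exact hinit n h2 h3
    · obtain ⟨m, rfl⟩ : ∃ m, n = m + 4 := ⟨n-4, by omega⟩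
      have hk := stmt18_key g hsupp hg2 hrec (fun _ => 1) m
      simp only [one_mul] at hk
      have i1 : ∑ j ∈ range (m+4), g (m+3) j = 1 := ih (m+3) (by omega) (by omega)
      have i2 : ∑ j ∈ range (m+3), g (m+2) j = 1 := ih (m+2) (by omega) (by omega)
      show ∑ k ∈ range (m+5), g (m+4) k = 1
      rw [hk, i1, i2]
      have hpos : (m:ℝ)+4 > 0 := by positivity
      field_simp
      ring

private lemma stmt18_meanrec (g : ℕ → ℕ → ℝ)
    (hsupp : ∀ n k : ℕ, 2 ≤ n → (k < 2 ∨ (n ≤ 3 ∧ n < k)) → g n k = 0)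
    (hinit : ∀ n : ℕ, 2 ≤ n → n ≤ 3 → ∑ k ∈ Finset.range (n + 1), g n k = 1)
    (hg2 : ∀ n : ℕ, 4 ≤ n → g n 2 = 1 / (2 * (n : ℝ)))
    (hrec : ∀ n k : ℕ, 4 ≤ n → 3 ≤ k →
      g n k = (1 - 1 / (n : ℝ)) * g (n - 1) (k - 1) +
        (1 / (2 * (n : ℝ))) * g (n - 2) (k - 1)) (m : ℕ) :
    ∑ k ∈ range (m+5), (k:ℝ) * g (m+4) k
      = (1 - 1/((m:ℝ)+4)) * ((∑ k ∈ range (m+4), (k:ℝ) * g (m+3) k) + 1)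
        + (1/(2*((m:ℝ)+4))) * ((∑ k ∈ range (m+3), (k:ℝ) * g (m+2) k) + 1)
        + 1/((m:ℝ)+4) := by
  have hk := stmt18_key g hsupp hg2 hrec (fun k => (k:ℝ)) m
  simp only [Nat.cast_ofNat, Nat.cast_add, Nat.cast_one] at hk
  rw [hk]
  have e1 : ∑ j ∈ range (m+4), ((j:ℝ)+1) * g (m+3) j
      = (∑ k ∈ range (m+4), (k:ℝ) * g (m+3) k) + ∑ j ∈ range (m+4), g (m+3) j := by
    rw [← Finset.sum_add_distrib]
    exact Finset.sum_congr rfl fun j _ => by ring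
  have e2 : ∑ j ∈ range (m+3), ((j:ℝ)+1) * g (m+2) j
      = (∑ k ∈ range (m+3), (k:ℝ) * g (m+2) k) + ∑ j ∈ range (m+3), g (m+2) j := by
    rw [← Finset.sum_add_distrib]
    exact Finset.sum_congr rfl fun j _ => by ring
  rw [e1, e2, stmt18_mass g hsupp hinit hg2 hrec (m+3) (by omega),
      stmt18_mass g hsupp hinit hg2 hrec (m+2) (by omega)]
  have hpos : (m:ℝ)+4 > 0 := by positivity
  field_simp
  ring

private lemma stmt18_bound (g : ℕ → ℕ → ℝ)
    (hsupp : ∀ n k : ℕ, 2 ≤ n → (k < 2 ∨ (n ≤ 3 ∧ n < k)) → g n k = 0)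
    (hinit : ∀ n : ℕ, 2 ≤ n → n ≤ 3 → ∑ k ∈ Finset.range (n + 1), g n k = 1)
    (hg2 : ∀ n : ℕ, 4 ≤ n → g n 2 = 1 / (2 * (n : ℝ)))
    (hrec : ∀ n k : ℕ, 4 ≤ n → 3 ≤ k →
      g n k = (1 - 1 / (n : ℝ)) * g (n - 1) (k - 1) +
        (1 / (2 * (n : ℝ))) * g (n - 2) (k - 1)) :
    ∃ B : ℝ, 1 ≤ B ∧ ∀ n, 2 ≤ n →
      |(∑ k ∈ range (n+1), (k:ℝ) * g n k) - 2*(n:ℝ)/3| ≤ B := by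
  set M : ℕ → ℝ := fun n => ∑ k ∈ range (n+1), (k:ℝ) * g n k with hM
  refine ⟨max (max |M 2 - 4/3| |M 3 - 2|) 1, le_max_right _ _, ?_⟩
  set B := max (max |M 2 - 4/3| |M 3 - 2|) 1 with hB
  have hB1 : (1:ℝ) ≤ B := le_max_right _ _
  intro n
  induction n using Nat.strong_induction_on with
  | _ n ih =>
    intro h2
    by_cases h3 : n ≤ 3
    · interval_cases n
      · have h' : |M 2 - 4/3| ≤ B := le_trans (le_max_left _ _) (le_max_left _ _)
        show |M 2 - 2*((2:ℕ):ℝ)/3| ≤ B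
        rw [show (2:ℝ)*((2:ℕ):ℝ)/3 = 4/3 from by norm_num]
        exact h'
      · have h' : |M 3 - 2| ≤ B := le_trans (le_max_right _ _) (le_max_left _ _)
        show |M 3 - 2*((3:ℕ):ℝ)/3| ≤ B
        rw [show (2:ℝ)*((3:ℕ):ℝ)/3 = 2 from by norm_num]
        exact h'
    · obtain ⟨m, rfl⟩ : ∃ m, n = m + 4 := ⟨n-4, by omega⟩
      have hrecM := stmt18_meanrec g hsupp hinit hg2 hrec m
      have hx : |M (m+3) - 2*((m:ℝ)+3)/3| ≤ B := by
        have := ih (m+3) (by omega) (by omega)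
        simpa [hM] using this
      have hy : |M (m+2) - 2*((m:ℝ)+2)/3| ≤ B := by
        have := ih (m+2) (by omega) (by omega)
        simpa [hM] using this
      have hm0 : (0:ℝ) ≤ (m:ℝ) := Nat.cast_nonneg m
      have hnpos : (0:ℝ) < (m:ℝ)+4 := by linarith
      have hident : M (m+4) - 2*(((m:ℕ):ℝ)+4)/3
          = (1 - 1/((m:ℝ)+4)) * (M (m+3) - 2*((m:ℝ)+3)/3)
            + (1/(2*((m:ℝ)+4))) * (M (m+2) - 2*((m:ℝ)+2)/3)
            + 1/(2*((m:ℝ)+4)) := by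
        show (∑ k ∈ range (m+5), (k:ℝ) * g (m+4) k) - 2*(((m:ℕ):ℝ)+4)/3 = _
        rw [hrecM]
        field_simp
        ring
      have goalcast : |M (m+4) - 2*(((m+4:ℕ)):ℝ)/3| ≤ B := by
        rw [show (((m+4:ℕ)):ℝ) = ((m:ℕ):ℝ)+4 from by push_cast; ring, hident]
        have h1 : (0:ℝ) ≤ 1 - 1/((m:ℝ)+4) := by
          rw [sub_nonneg, div_le_one hnpos]; linarith
        have h2' : (0:ℝ) ≤ 1/(2*((m:ℝ)+4)) := by positivity
        have habs : |(1 - 1/((m:ℝ)+4)) * (M (m+3) - 2*((m:ℝ)+3)/3)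
            + (1/(2*((m:ℝ)+4))) * (M (m+2) - 2*((m:ℝ)+2)/3)
            + 1/(2*((m:ℝ)+4))|
            ≤ (1 - 1/((m:ℝ)+4)) * |M (m+3) - 2*((m:ℝ)+3)/3|
              + (1/(2*((m:ℝ)+4))) * |M (m+2) - 2*((m:ℝ)+2)/3|
              + 1/(2*((m:ℝ)+4)) := by
          calc |_| ≤ |(1 - 1/((m:ℝ)+4)) * (M (m+3) - 2*((m:ℝ)+3)/3)
              + (1/(2*((m:ℝ)+4))) * (M (m+2) - 2*((m:ℝ)+2)/3)| + |1/(2*((m:ℝ)+4))| :=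
                abs_add_le _ _
            _ ≤ |(1 - 1/((m:ℝ)+4)) * (M (m+3) - 2*((m:ℝ)+3)/3)|
                + |(1/(2*((m:ℝ)+4))) * (M (m+2) - 2*((m:ℝ)+2)/3)| + |1/(2*((m:ℝ)+4))| := by
                gcongr; exact abs_add_le _ _
            _ = _ := by
                rw [abs_mul, abs_mul, abs_of_nonneg h1, abs_of_nonneg h2']
        refine le_trans habs ?_
        have ht : 1/((m:ℝ)+4) = 2*(1/(2*((m:ℝ)+4))) := by
          field_simp
        rw [ht]
        have hinv : 1/(2*((m:ℝ)+4)) ≤ 1/8 := by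
          apply one_div_le_one_div_of_le <;> linarith
        have htpos : (0:ℝ) < 1/(2*((m:ℝ)+4)) := by positivity
        have s1 : (1 - 2*(1/(2*((m:ℝ)+4)))) * |M (m+3) - 2*((m:ℝ)+3)/3|
            ≤ (1 - 2*(1/(2*((m:ℝ)+4)))) * B :=
          mul_le_mul_of_nonneg_left hx (by linarith)
        have s2 : (1/(2*((m:ℝ)+4))) * |M (m+2) - 2*((m:ℝ)+2)/3|
            ≤ (1/(2*((m:ℝ)+4))) * B :=
          mul_le_mul_of_nonneg_left hy htpos.le
        have s3 : (0:ℝ) ≤ (1/(2*((m:ℝ)+4))) * (B - 1) :=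
          mul_nonneg htpos.le (by linarith)
        nlinarith [s1, s2, s3]
      simpa [hM] using goalcast

end

/-- with `g_{n,2} = 1/(2n)` and
`g_{n,k} = (1 - 1/n)·g_{n-1,k-1} + (1/(2n))·g_{n-2,k-1}` for `n ≥ 4` (probability
initial conditions for `n ≤ 3`), the mean `Σ_k k·g_{n,k}` is asymptotically
equivalent to `2n/3`, i.e. `(Σ_k k·g_{n,k})/n → 2/3`. -/
theorem stmt18 (g : ℕ → ℕ → ℝ)
    (hsupp : ∀ n k : ℕ, 2 ≤ n → (k < 2 ∨ (n ≤ 3 ∧ n < k)) → g n k = 0)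
    (hnonneg : ∀ n k : ℕ, 2 ≤ n → 0 ≤ g n k)
    (hinit : ∀ n : ℕ, 2 ≤ n → n ≤ 3 → ∑ k ∈ Finset.range (n + 1), g n k = 1)
    (hg2 : ∀ n : ℕ, 4 ≤ n → g n 2 = 1 / (2 * (n : ℝ)))
    (hrec : ∀ n k : ℕ, 4 ≤ n → 3 ≤ k →
      g n k = (1 - 1 / (n : ℝ)) * g (n - 1) (k - 1) +
        (1 / (2 * (n : ℝ))) * g (n - 2) (k - 1)) :
    Tendsto
      (fun n : ℕ => (∑ k ∈ Finset.range (n + 1), (k : ℝ) * g n k) / (n : ℝ))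
      atTop (nhds (2 / 3)) := by
  obtain ⟨B, hB1, hBd⟩ := stmt18_bound g hsupp hinit hg2 hrec
  have hsq : Tendsto
      (fun n : ℕ => (∑ k ∈ Finset.range (n+1), (k:ℝ) * g n k) / (n:ℝ) - 2/3)
      atTop (nhds 0) := by
    refine squeeze_zero_norm' (a := fun n : ℕ => B / (n:ℝ)) ?_ (tendsto_const_div_atTop_nhds_zero_nat B)
    · filter_upwards [eventually_ge_atTop 2] with n hn
      have hn2 : (2:ℝ) ≤ (n:ℝ) := by exact_mod_cast hn
      have hnp : (0:ℝ) < (n:ℝ) := by linarith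
      have h := hBd n hn
      rw [Real.norm_eq_abs]
      have e : (∑ k ∈ Finset.range (n+1), (k:ℝ) * g n k) / (n:ℝ) - 2/3
          = ((∑ k ∈ Finset.range (n+1), (k:ℝ) * g n k) - 2*(n:ℝ)/3) / (n:ℝ) := by
        field_simp
      rw [e, abs_div, abs_of_pos hnp]
      gcongr
  have := hsq.add (tendsto_const_nhds (x := (2:ℝ)/3))
  simpa using this
end
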